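/- For any finite solvable group G, there exist prime numbers p₁, …, p_r such that G embeds into the iterated wreath product Z_{p₁} ≀ Z_{p₂} ≀ ⋯ ≀ Z_{p_r}, where Z_p denotes the cyclic group of order p. -/

import Mathlib

def wreathAct (H G : Type*) [Group H] [Group G] : G →* MulAut (G → H) where
  toFun g :=
    { toFun := fun F x => F (g⁻¹ * x)
      invFun := fun F x => F (g * x)
      left_inv := fun F => by funext x; simp [mul_assoc]
      right_inv := fun F => by funext x; simp [mul_assoc]
      map_mul' := fun F₁ F₂ => rfl }
  map_one' := by ext F x; simp
  map_mul' := fun g₁ g₂ => by ext F x; simp [mul_assoc]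

/-- The unrestricted wreath product `H ≀ G = Hᴳ ⋊ G`. -/
abbrev Wreath (H G : Type*) [Group H] [Group G] := SemidirectProduct (G → H) G (wreathAct H G)


/-- A group bundled with its group structure. -/
structure GroupBundle : Type 1 where
  carrier : Type
  [str : Group carrier]

attribute [instance] GroupBundle.str

/-- `iterWreathFrom W [A₁, …, Aₖ] = ((W ≀ A₁) ≀ A₂) ≀ ⋯ ≀ Aₖ` (left-nested). -/
def iterWreathFrom : GroupBundle → List GroupBundle → GroupBundle
  | W, [] => W
  | W, A :: rest => iterWreathFrom ⟨Wreath W.carrier A.carrier⟩ rest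

/-- The left-nested iterated wreath product of a list of groups:
`[H₁, H₂, …, Hₖ] ↦ ((H₁ ≀ H₂) ≀ H₃) ≀ ⋯ ≀ Hₖ`, the trivial group for the empty list. -/
def iterWreathList : List GroupBundle → GroupBundle
  | [] => ⟨PUnit⟩
  | A :: rest => iterWreathFrom A rest

open Function Subgroup

/-- Kaloujnine–Krasner embedding: if `π : G → Q` is surjective and the kernel of `π`
embeds in `W`, then `G` embeds in `W ≀ Q`. -/
lemma wreath_kk {G Q W : Type*} [Group G] [Group Q] [Group W]
    (π : G →* Q) (hπ : Surjective π) (ι : ↥π.ker →* W) (hι : Injective ι) :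
    ∃ f : G →* Wreath W Q, Injective f := by
  classical
  set t : Q → G := surjInv hπ with ht
  have hπt : ∀ q, π (t q) = q := fun q => surjInv_eq hπ q
  have mem : ∀ (g : G) (q : Q), (t q)⁻¹ * g * t ((π g)⁻¹ * q) ∈ π.ker := by
    intro g q
    simp [MonoidHom.mem_ker, hπt, mul_assoc]
  refine ⟨{ toFun := fun g => ⟨fun q => ι ⟨(t q)⁻¹ * g * t ((π g)⁻¹ * q), mem g q⟩, π g⟩,
            map_one' := ?_, map_mul' := ?_ }, ?_⟩
  · ext q
    · show ι _ = 1
      have h1 : (⟨(t q)⁻¹ * 1 * t (((π 1 : Q))⁻¹ * q), mem 1 q⟩ : π.ker) = 1 := by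
        apply Subtype.ext
        simp
      rw [h1, map_one]
    · simp
  · intro g h
    ext q
    · show ι _ = ι _ * ι _
      rw [← map_mul]
      congr 1
      apply Subtype.ext
      show (t q)⁻¹ * (g * h) * t ((π (g*h))⁻¹ * q)
        = ((t q)⁻¹ * g * t ((π g)⁻¹ * q)) * ((t ((π g)⁻¹ * q))⁻¹ * h * t ((π h)⁻¹ * ((π g)⁻¹ * q)))
      rw [map_mul, mul_inv_rev, mul_assoc ((π h)⁻¹)]
      group
    · simp
  · rw [injective_iff_map_eq_one]
    intro g hg
    have hr : π g = 1 := congrArg SemidirectProduct.right hg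
    have hl : ι ⟨(t 1)⁻¹ * g * t ((π g)⁻¹ * 1), mem g 1⟩ = 1 :=
      congrFun (congrArg SemidirectProduct.left hg) 1
    rw [← map_one ι] at hl
    have h2 : (t 1)⁻¹ * g * t ((π g)⁻¹ * 1) = 1 := congrArg Subtype.val (hι hl)
    rw [hr] at h2
    simp at h2
    rw [mul_assoc, inv_mul_eq_one] at h2
    exact mul_right_cancel (h2.symm.trans (one_mul _).symm)

lemma commutator_ne_top' (G : Type) [Group G] [Nontrivial G] (h : IsSolvable G) :
    commutator G ≠ ⊤ := by
  intro htop
  have hall : ∀ n, derivedSeries G n = ⊤ := by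
    intro n; induction n with
    | zero => rfl
    | succ n ih => rw [derivedSeries_succ, ih, ← commutator_def, htop]
  obtain ⟨⟨n, hn⟩⟩ := h
  rw [hall n] at hn
  exact top_ne_bot hn

/-- A nontrivial finite solvable group has a surjection onto a cyclic group of prime order. -/
lemma exists_prime_quotient (G : Type) [Group G] [Finite G] [Nontrivial G] (h : IsSolvable G) :
    ∃ p : ℕ, p.Prime ∧ ∃ π : G →* Multiplicative (ZMod p), Surjective π := by
  classical
  let A := Abelianization G
  have hA : Nontrivial A := by
    by_contra hns
    rw [not_nontrivial_iff_subsingleton] at hns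
    apply commutator_ne_top' G h
    ext x
    simp only [Subgroup.mem_top, iff_true]
    have h1 : (Abelianization.of x : A) = 1 := Subsingleton.elim _ _
    exact (QuotientGroup.eq_one_iff x).mp h1
  obtain ⟨M, hM, -⟩ := (eq_top_or_exists_le_coatom (⊥ : Subgroup A)).resolve_left
    (by simpa using (Subgroup.top_ne_bot (G := A)).symm)
  let Q := A ⧸ M
  have hQnt : Nontrivial Q := by
    obtain ⟨a, ha⟩ := SetLike.exists_of_lt (lt_top_iff_ne_top.mpr hM.1)
    exact ⟨⟨QuotientGroup.mk a, 1, fun hcon => ha.2 ((QuotientGroup.eq_one_iff a).mp hcon)⟩⟩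
  have hsimple : IsSimpleGroup Q := by
    constructor
    intro H _
    have hle : M ≤ comap (QuotientGroup.mk' M) H := by
      intro m hm
      have h1 : (QuotientGroup.mk' M) m = 1 := (QuotientGroup.eq_one_iff m).mpr hm
      show (QuotientGroup.mk' M) m ∈ H
      rw [h1]; exact H.one_mem
    rcases eq_or_lt_of_le hle with heq | hlt
    · left
      have h2 := map_comap_eq_self_of_surjective (QuotientGroup.mk'_surjective M) H
      rw [← h2, ← heq]
      apply le_antisymm _ bot_le
      rintro x ⟨y, hy, rfl⟩
      exact mem_bot.mpr ((QuotientGroup.eq_one_iff y).mpr hy)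
    · right
      have h2 := map_comap_eq_self_of_surjective (QuotientGroup.mk'_surjective M) H
      rw [← h2, hM.2 _ hlt]
      exact Subgroup.map_top_of_surjective _ (QuotientGroup.mk'_surjective M)
  haveI := hsimple
  haveI : IsCyclic Q := IsSimpleGroup.isCyclic
  have hp : (Nat.card Q).Prime := IsSimpleGroup.prime_card
  let e : Multiplicative (ZMod (Nat.card Q)) ≃* Q := zmodCyclicMulEquiv inferInstance
  refine ⟨Nat.card Q, hp, (e.symm.toMonoidHom.comp ((QuotientGroup.mk' M).comp
    (Abelianization.of))), ?_⟩
  exact e.symm.surjective.comp ((QuotientGroup.mk'_surjective M).comp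
    (QuotientGroup.mk'_surjective _))

lemma iterFrom_append : ∀ (l : List GroupBundle) (W A : GroupBundle),
    iterWreathFrom W (l ++ [A]) = ⟨Wreath (iterWreathFrom W l).carrier A.carrier⟩
  | [], _, _ => rfl
  | B :: l, W, A => by
      simp only [List.cons_append, iterWreathFrom]
      exact iterFrom_append l _ A

lemma iterList_append (l : List GroupBundle) (hl : l ≠ []) (A : GroupBundle) :
    iterWreathList (l ++ [A]) = ⟨Wreath (iterWreathList l).carrier A.carrier⟩ := by
  cases l with
  | nil => exact absurd rfl hl
  | cons B l => simp only [List.cons_append, iterWreathList]; exact iterFrom_append l B A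

lemma transportHom {G : Type} [Group G] {B₁ B₂ : GroupBundle} (h : B₁ = B₂)
    (hf : ∃ f : G →* B₁.carrier, Injective f) : ∃ g : G →* B₂.carrier, Injective g := by
  subst h; exact hf

lemma main_aux : ∀ (n : ℕ) (G : Type) [Group G] [Finite G], IsSolvable G → Nat.card G ≤ n →
    ∃ ps : List ℕ, ps ≠ [] ∧ (∀ q ∈ ps, q.Prime) ∧
      ∃ f : G →* (iterWreathList
          (ps.map fun q => (⟨Multiplicative (ZMod q)⟩ : GroupBundle))).carrier,
        Injective f := by
  intro n
  induction n with
  | zero =>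
    intro G _ _ _ hcard
    have := Nat.card_pos (α := G)
    omega
  | succ n ih =>
    intro G _ _ hs hcard
    by_cases hG : Subsingleton G
    · refine ⟨[2], by simp, by simp [Nat.prime_two], 1, fun a b _ => Subsingleton.elim a b⟩
    haveI : Nontrivial G := not_subsingleton_iff_nontrivial.mp hG
    obtain ⟨p, hp, π, hπ⟩ := exists_prime_quotient G hs
    haveI : Fact p.Prime := ⟨hp⟩
    have hidx : π.ker.index = Nat.card (Multiplicative (ZMod p)) := by
      rw [Subgroup.index_ker π, MonoidHom.range_eq_top.mpr hπ]
      exact Nat.card_congr (Equiv.subtypeUnivEquiv fun _ => trivial)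
    have hidx2 : 2 ≤ π.ker.index := by
      rw [hidx]
      exact Finite.one_lt_card
    have hmul := Subgroup.card_mul_index π.ker
    have hker_pos := Nat.card_pos (α := ↥π.ker)
    have hkercard : Nat.card ↥π.ker ≤ n := by nlinarith
    obtain ⟨ps, hne, hprime, ι, hι⟩ := @ih ↥π.ker _ _ (by haveI : Group.IsSolvable G := hs; exact (inferInstance : Group.IsSolvable ↥π.ker)) hkercard
    obtain ⟨f, hf⟩ := wreath_kk π hπ ι hι
    refine ⟨ps ++ [p], by simp, ?_, ?_⟩
    · intro q hq
      rcases List.mem_append.mp hq with h1 | h1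
      · exact hprime q h1
      · simpa using (List.mem_singleton.mp h1) ▸ hp
    · have heq : (⟨Wreath (iterWreathList
          (ps.map fun q => (⟨Multiplicative (ZMod q)⟩ : GroupBundle))).carrier
          (Multiplicative (ZMod p))⟩ : GroupBundle)
          = iterWreathList ((ps ++ [p]).map fun q =>
              (⟨Multiplicative (ZMod q)⟩ : GroupBundle)) := by
        simp only [List.map_append, List.map_cons, List.map_nil]
        exact (iterList_append _ (fun hcon => hne (List.map_eq_nil_iff.mp hcon))
          (⟨Multiplicative (ZMod p)⟩ : GroupBundle)).symm
      exact transportHom heq ⟨f, hf⟩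

/-- For any finite solvable group `G`, there exist prime numbers `p₁, …, p_r` such that
`G` embeds into the left-nested iterated wreath product `Z_{p₁} ≀ Z_{p₂} ≀ ⋯ ≀ Z_{p_r}`
of cyclic groups of prime order. -/
theorem stmt6 (G : Type) [Group G] [Finite G] (hsolv : IsSolvable G) :
    ∃ (r : ℕ) (p : Fin r → ℕ), (∀ i, (p i).Prime) ∧
      ∃ f : G →*
          (iterWreathList
            (List.ofFn fun i : Fin r =>
              (⟨Multiplicative (ZMod (p i))⟩ : GroupBundle))).carrier,
        Function.Injective f := by
  obtain ⟨ps, -, hprime, f, hf⟩ := main_aux (Nat.card G) G hsolv le_rfl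
  refine ⟨ps.length, fun i => ps.get i, fun i => hprime _ (List.get_mem ps i), ?_⟩
  have h1 : (List.ofFn fun i : Fin ps.length =>
        (⟨Multiplicative (ZMod (ps.get i))⟩ : GroupBundle))
      = ps.map fun q => (⟨Multiplicative (ZMod q)⟩ : GroupBundle) := by
    conv_rhs => rw [← List.ofFn_get ps]
    rw [List.map_ofFn]
    rfl
  rw [h1]
  exact ⟨f, hf⟩
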